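/- Consider the WC-Penalty iterates θ_t = (ρ_t, z_t, δ_t). For every t ≥ 1 and s ∈ [S]: δ_{t,s} ≥ 0; if λ_s f_s(z_{t−1}) + δ_{t−1,s} − ρ_{t−1} ≥ 0 then δ_{t,s} ≤ δ_{t−1,s}; and if λ_s f_s(z_{t−1}) + δ_{t−1,s} − ρ_{t−1} < 0, f_s(z_{t−1}) > 0, and ρ_{t−1} ≤ ρ_0, then δ_{t,s} ≤ δ_{t−1,s} + η v ρ_0. -/
import Mathlib


open scoped RealInnerProductSpace

noncomputable section

/-- One step of the WC-Penalty iteration `θ ↦ P_C(θ − η ∇P(θ))` on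
`θ = (ρ, z, δ) ∈ C = ℝ × ℝ^k × ℝ_+^S`: the projection onto `C` leaves `(ρ, z)`
unchanged and clips each `δ_s` at `0`; in particular
`δ'_s = max{δ_s − η v (λ_s f_s(z) + δ_s − ρ), 0}`. -/
def penStep (k S q : ℕ)
    (f : Fin S → EuclideanSpace ℝ (Fin k) → ℝ)
    (h : Fin q → EuclideanSpace ℝ (Fin k) → ℝ)
    (lam : Fin S → ℝ) (u v η : ℝ)
    (θ : ℝ × EuclideanSpace ℝ (Fin k) × (Fin S → ℝ)) :
    ℝ × EuclideanSpace ℝ (Fin k) × (Fin S → ℝ) :=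
  ( θ.1 - η * (1 - v * ∑ s, (lam s * f s θ.2.1 + θ.2.2 s - θ.1)),
    θ.2.1 - η • (u • ∑ i, h i θ.2.1 • gradient (h i) θ.2.1
      + v • ∑ s, ((lam s * f s θ.2.1 + θ.2.2 s - θ.1) * lam s) • gradient (f s) θ.2.1),
    fun s => max (θ.2.2 s - η * (v * (lam s * f s θ.2.1 + θ.2.2 s - θ.1))) 0 )

/-- **behavior of the slack variables `δ_t`.** For the WC-Penalty
iterates `θ_t = (ρ_t, z_t, δ_t)` started at `θ₀ ∈ C`, for every `t ≥ 1` and `s`: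
`δ_{t,s} ≥ 0`; if `λ_s f_s(z_{t−1}) + δ_{t−1,s} − ρ_{t−1} ≥ 0` then
`δ_{t,s} ≤ δ_{t−1,s}`; and if `λ_s f_s(z_{t−1}) + δ_{t−1,s} − ρ_{t−1} < 0`,
`f_s(z_{t−1}) > 0`, and `ρ_{t−1} ≤ ρ₀`, then `δ_{t,s} ≤ δ_{t−1,s} + η v ρ₀`. -/
theorem wcPenalty_slack_bounds
    (k S q : ℕ)
    (f : Fin S → EuclideanSpace ℝ (Fin k) → ℝ)
    (h : Fin q → EuclideanSpace ℝ (Fin k) → ℝ)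
    (hf : ∀ s, ContDiff ℝ 1 (f s))
    (hh : ∀ i, ContDiff ℝ 1 (h i))
    (u v η : ℝ) (hu : 0 < u) (hv : 0 < v) (hη : 0 < η)
    (lam : Fin S → ℝ) (hlam_pos : ∀ s, 0 < lam s) (hlam_sum : ∑ s, lam s = 1)
    -- iterates started at `θ₀ ∈ C`
    (θ₀ : ℝ × EuclideanSpace ℝ (Fin k) × (Fin S → ℝ)) (hδ₀ : ∀ s, 0 ≤ θ₀.2.2 s)
    (θ : ℕ → ℝ × EuclideanSpace ℝ (Fin k) × (Fin S → ℝ))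
    (hθ0 : θ 0 = θ₀)
    (hθstep : ∀ t, θ (t + 1) = penStep k S q f h lam u v η (θ t)) :
    ∀ t : ℕ, 1 ≤ t → ∀ s : Fin S,
      (0 ≤ (θ t).2.2 s) ∧
      (0 ≤ lam s * f s (θ (t-1)).2.1 + (θ (t-1)).2.2 s - (θ (t-1)).1 →
        (θ t).2.2 s ≤ (θ (t-1)).2.2 s) ∧
      (lam s * f s (θ (t-1)).2.1 + (θ (t-1)).2.2 s - (θ (t-1)).1 < 0 →
        0 < f s (θ (t-1)).2.1 →
        (θ (t-1)).1 ≤ θ₀.1 →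
        (θ t).2.2 s ≤ (θ (t-1)).2.2 s + η * v * θ₀.1) := by
  have hnn : ∀ t s, 0 ≤ (θ t).2.2 s := by
    intro t s
    cases t with
    | zero => rw [hθ0]; exact hδ₀ s
    | succ n => rw [hθstep n]; exact le_max_right _ _
  rintro t ht s
  obtain ⟨n, rfl⟩ : ∃ n, t = n + 1 := ⟨t - 1, (Nat.succ_pred_eq_of_pos ht).symm⟩
  have hprev : (n + 1 - 1) = n := rfl
  rw [hprev, hθstep n]
  set e : ℝ := lam s * f s (θ n).2.1 + (θ n).2.2 s - (θ n).1 with he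
  have hδval : (penStep k S q f h lam u v η (θ n)).2.2 s
      = max ((θ n).2.2 s - η * (v * e)) 0 := rfl
  rw [hδval]
  refine ⟨le_max_right _ _, ?_, ?_⟩
  · intro hpos
    apply max_le
    · nlinarith [mul_nonneg (mul_nonneg hη.le hv.le) hpos]
    · exact hnn n s
  · intro hneg hfpos hρ
    have hηv : 0 < η * v := mul_pos hη hv
    have hx : (θ n).2.2 s - η * (v * e) ≤ (θ n).2.2 s + η * v * θ₀.1 := by
      have h1 : -e ≤ θ₀.1 := by
        have := hnn n s
        have := mul_pos (hlam_pos s) hfpos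
        nlinarith
      nlinarith
    exact max_le hx (by nlinarith [hnn n s])

end
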